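/- With structure constants c^{IJ}_K = R̃^a_{i₁}{}^{j₀}_b R⁻¹{}^b_{k₀}{}^{i₀}_c R^{k₁}_n{}^c_m R^m_a{}^n_{j₁} built from a bi-invertible solution R of the QYBE, the counit compatibility c^{IJ}_K δ^K = δ^I δ^J holds, where δ^I = δ^{i₀}_{i₁} (Kronecker delta with multi-indices I = (i₀,i₁)). -/
import Mathlib


open Matrix

variable {k : Type*} [Field k] {n : ℕ}

/-- Pairs of indices, labelling a basis of `V ⊗ V` (or multi-indices `I = (i₀, i₁)`). -/
abbrev I2 (n : ℕ) := Fin n × Fin n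

/-- Triples of indices, labelling a basis of `V ⊗ V ⊗ V`. -/
abbrev I3 (n : ℕ) := Fin n × Fin n × Fin n

/-- `A₁₂ = A ⊗ id`, the lift of an operator on `V ⊗ V` to the first two factors of
`V ⊗ V ⊗ V`. -/
def amp12 (A : Matrix (I2 n) (I2 n) k) : Matrix (I3 n) (I3 n) k :=
  Matrix.of fun p q => A (p.1, p.2.1) (q.1, q.2.1) * (if p.2.2 = q.2.2 then 1 else 0)

/-- `A₁₃`, acting on the first and third factors of `V ⊗ V ⊗ V`. -/
def amp13 (A : Matrix (I2 n) (I2 n) k) : Matrix (I3 n) (I3 n) k :=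
  Matrix.of fun p q => A (p.1, p.2.2) (q.1, q.2.2) * (if p.2.1 = q.2.1 then 1 else 0)

/-- `A₂₃`, acting on the last two factors of `V ⊗ V ⊗ V`. -/
def amp23 (A : Matrix (I2 n) (I2 n) k) : Matrix (I3 n) (I3 n) k :=
  Matrix.of fun p q => A (p.2.1, p.2.2) (q.2.1, q.2.2) * (if p.1 = q.1 then 1 else 0)

/-- `A₂₁ = τ ∘ A ∘ τ`, conjugation by the flip of the two tensor factors. -/
def flipM (A : Matrix (I2 n) (I2 n) k) : Matrix (I2 n) (I2 n) k :=
  Matrix.of fun p q => A (p.2, p.1) (q.2, q.1)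

/-- The quantum Yang–Baxter equation `R₁₂R₁₃R₂₃ = R₂₃R₁₃R₁₂`. -/
def QYBE (R : Matrix (I2 n) (I2 n) k) : Prop :=
  amp12 R * amp13 R * amp23 R = amp23 R * amp13 R * amp12 R

/-- `Rtil` is the second inverse `R̃ = ((R^{t₂})⁻¹)^{t₂}` of `R`, characterized by
`R̃ⁱₐᵇₗ Rᵃⱼᵏᵦ = δⁱⱼ δᵏₗ = Rⁱₐᵇₗ R̃ᵃⱼᵏᵦ` (sum over `a`, `b`).  Here the entry
`R ((i,k),(j,l))` denotes `Rⁱⱼᵏₗ`. -/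
def IsSecondInverse (R Rtil : Matrix (I2 n) (I2 n) k) : Prop :=
  (∀ i j kk l : Fin n, ∑ a, ∑ b, Rtil (i, b) (a, l) * R (a, kk) (j, b)
      = (if i = j then (1 : k) else 0) * (if kk = l then 1 else 0)) ∧
  (∀ i j kk l : Fin n, ∑ a, ∑ b, R (i, b) (a, l) * Rtil (a, kk) (j, b)
      = (if i = j then (1 : k) else 0) * (if kk = l then 1 else 0))

/-- The structure constants
`c^{IJ}_K = R̃ᵃ_{i₁}{}^{j₀}_b R⁻¹{}ᵇ_{k₀}{}^{i₀}_c R^{k₁}_n{}ᶜ_m Rᵐₐ{}ⁿ_{j₁}`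
of the matrix braided-Lie algebra associated to a bi-invertible R-matrix
(repeated indices summed). -/
def braidedC (R Rinv Rtil : Matrix (I2 n) (I2 n) k) (I J K : I2 n) : k :=
  ∑ a, ∑ b, ∑ c, ∑ m, ∑ nn,
    Rtil (a, J.1) (I.2, b) * Rinv (b, I.1) (K.1, c) *
      R (K.2, c) (nn, m) * R (m, nn) (a, J.2)

/-- Counit compatibility `c^{IJ}_K δ^K = δ^I δ^J` for the structure constants built from a
bi-invertible solution `R` of the QYBE, where `δ^I = δ^{i₀}_{i₁}`. -/
theorem braidedC_counit (R Rinv Rtil : Matrix (I2 n) (I2 n) k)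
    (hYB : QYBE R) (h1 : R * Rinv = 1) (h2 : Rinv * R = 1)
    (ht : IsSecondInverse R Rtil) :
    ∀ I J : I2 n, ∑ K : Fin n, braidedC R Rinv Rtil I J (K, K)
      = (if I.1 = I.2 then (1 : k) else 0) * (if J.1 = J.2 then 1 else 0) := by
  rintro ⟨i0, i1⟩ ⟨j0, j1⟩
  have swap3 : ∀ g : Fin n → Fin n → Fin n → k,
      ∑ c, ∑ m, ∑ nn, g c m nn = ∑ m, ∑ nn, ∑ c, g c m nn := by
    intro g
    rw [Finset.sum_comm]
    exact Finset.sum_congr rfl fun m _ => Finset.sum_comm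
  have swap4 : ∀ f : Fin n → Fin n → Fin n → Fin n → k,
      ∑ K, ∑ c, ∑ m, ∑ nn, f K c m nn = ∑ m, ∑ nn, ∑ K, ∑ c, f K c m nn := by
    intro f
    calc ∑ K, ∑ c, ∑ m, ∑ nn, f K c m nn
        = ∑ K, ∑ m, ∑ nn, ∑ c, f K c m nn :=
          Finset.sum_congr rfl fun K _ => swap3 _
      _ = ∑ m, ∑ K, ∑ nn, ∑ c, f K c m nn := Finset.sum_comm
      _ = ∑ m, ∑ nn, ∑ K, ∑ c, f K c m nn :=
          Finset.sum_congr rfl fun m _ => Finset.sum_comm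
  have key : ∀ b nn m : Fin n,
      (∑ K : Fin n, ∑ c, Rinv (b, i0) (K, c) * R (K, c) (nn, m))
        = (if b = nn then (1 : k) else 0) * (if i0 = m then 1 else 0) := by
    intro b nn m
    have h := congrFun (congrFun h2 (b, i0)) (nn, m)
    rw [Matrix.mul_apply, Fintype.sum_prod_type] at h
    rw [h, Matrix.one_apply]
    by_cases hb : b = nn <;> by_cases hm : i0 = m <;> simp [Prod.ext_iff, ite_and, hb, hm]
  simp only [braidedC]
  rw [Finset.sum_comm]
  refine Eq.trans (Finset.sum_congr rfl fun a _ => Finset.sum_comm) ?_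
  rw [← ht.2 i0 i1 j0 j1]
  refine Finset.sum_congr rfl fun a _ => Finset.sum_congr rfl fun b _ => ?_
  rw [swap4]
  have inner : ∀ m nn : Fin n,
      (∑ K : Fin n, ∑ c, Rtil (a, j0) (i1, b) * Rinv (b, i0) (K, c) *
          R (K, c) (nn, m) * R (m, nn) (a, j1))
        = Rtil (a, j0) (i1, b) *
            ((if b = nn then (1 : k) else 0) * (if i0 = m then 1 else 0)) *
            R (m, nn) (a, j1) := by
    intro m nn
    rw [← key b nn m]
    simp only [Finset.sum_mul, Finset.mul_sum]
    exact Finset.sum_congr rfl fun K _ => Finset.sum_congr rfl fun c _ => by ring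
  simp only [inner]
  simp [mul_ite, ite_mul, mul_zero, zero_mul, mul_one, one_mul, Finset.sum_ite_eq,
    Finset.sum_ite_eq', mul_comm]
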